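/- arXiv:2102.09374 — 2 statements merged into one kernel-verified Lean document; each statement's English description precedes it below -/
import Mathlib

section
/- If σ is completely erasing and verifies the optimality condition, then for every finite binary word w with σ^h(w) = p (p finite) and every infinite binary word u, there exists an infinite binary word v such that σ^h(wv) = pu. -/
/-- The alternating extension of a block substitution given by simple
substitutions `s i : Bool -> List Bool` applied to the digit in position `i` mod `k`. -/
def altApply (k : Nat) (s : Nat -> Bool -> List Bool) (w : List Bool) : List Bool :=
  (w.zipIdx.map fun p => s (p.2 % k) p.1).flatten

/-- The length-`m` prefix of an infinite binary word. -/
def prefixOf (u : Nat -> Bool) (m : Nat) : List Bool := List.ofFn fun i : Fin m => u i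

/-- Concatenation of the first `m` words of a sequence of finite words. -/
def concatPre (v : Nat -> List Bool) (m : Nat) : List Bool :=
  (List.ofFn fun i : Fin m => v i).flatten

/-- The optimality condition: every infinite binary word is an infinite
concatenation of nonempty images of length-`k` blocks under `sigma`. -/
def OC (k : Nat) (sigma : List Bool -> List Bool) : Prop :=
  ∀ w : Nat -> Bool, ∃ u : Nat -> List Bool,
    (∀ i, (u i).length = k ∧ sigma (u i) ≠ []) ∧
    ∀ m, concatPre (fun i => sigma (u i)) m
        = prefixOf w (concatPre (fun i => sigma (u i)) m).length

namespace Aux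

def altFrom (k : Nat) (s : Nat -> Bool -> List Bool) : Nat → List Bool → List Bool
  | _, [] => []
  | a, b :: w => s (a % k) b ++ altFrom k s (a+1) w

theorem altFrom_append (k s) (x : List Bool) : ∀ (a : Nat) (y : List Bool),
    altFrom k s a (x ++ y) = altFrom k s a x ++ altFrom k s (a + x.length) y := by
  induction x with
  | nil => intro a y; simp [altFrom]
  | cons b x ih =>
      intro a y
      show s (a % k) b ++ altFrom k s (a+1) (x ++ y)
          = altFrom k s a (b::x) ++ altFrom k s (a + (x.length+1)) y
      rw [ih, show a+1+x.length = a + (x.length+1) from by omega]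
      show _ = (s (a % k) b ++ altFrom k s (a+1) x) ++ _
      rw [List.append_assoc]

theorem altFrom_congr (k s) (w : List Bool) : ∀ (a b : Nat), a % k = b % k →
    altFrom k s a w = altFrom k s b w := by
  induction w with
  | nil => intros; rfl
  | cons c w ih =>
      intro a b hab
      simp only [altFrom, hab]
      rw [ih (a+1) (b+1) (by rw [Nat.add_mod a 1 k, hab, ← Nat.add_mod])]

theorem enumFrom_eq (k s) (w : List Bool) : ∀ a : Nat,
    ((w.zipIdx a).map fun p => s (p.2 % k) p.1).flatten = altFrom k s a w := by
  induction w with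
  | nil => intro a; rfl
  | cons b w ih =>
      intro a
      simp only [List.zipIdx_cons, List.map, List.flatten_cons, altFrom, ih]

theorem altApply_eq (k s) (w : List Bool) : altApply k s w = altFrom k s 0 w := by
  rw [altApply, enumFrom_eq]

theorem concatPre_succ (v : Nat → List Bool) (m : Nat) :
    concatPre v (m+1) = concatPre v m ++ v m := by
  rw [concatPre, concatPre, List.ofFn_succ', List.concat_eq_append]
  simp [List.flatten]

theorem concatPre_length (k : Nat) (u : Nat → List Bool) (hblk : ∀ i, (u i).length = k)
    (m : Nat) : (concatPre u m).length = m * k := by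
  induction m with
  | zero => simp [concatPre]
  | succ m ih => rw [concatPre_succ]; simp [ih, hblk, Nat.succ_mul]

theorem le_concatPre_length (v : Nat → List Bool) (hne : ∀ i, v i ≠ []) (m : Nat) :
    m ≤ (concatPre v m).length := by
  induction m with
  | zero => simp
  | succ m ih =>
      rw [concatPre_succ]
      have := List.length_pos_iff.mpr (hne m)
      simp only [List.length_append]; omega

theorem concatPre_prefix (v : Nat → List Bool) {m m' : Nat} (h : m ≤ m') :
    concatPre v m <+: concatPre v m' := by
  induction m' with
  | zero => simp_all
  | succ m' ih =>
      rcases Nat.lt_or_ge m (m'+1) with h' | h'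
      · exact (ih (by omega)).trans (by rw [concatPre_succ]; exact List.prefix_append _ _)
      · have : m = m' + 1 := by omega
        subst this; exact List.prefix_refl _

theorem prefixOf_length (u : Nat → Bool) (m : Nat) : (prefixOf u m).length = m := by
  simp [prefixOf]

theorem prefixOf_getElem (u : Nat → Bool) (m i : Nat) (h : i < (prefixOf u m).length) :
    (prefixOf u m)[i] = u i := by
  simp [prefixOf]

theorem prefixOf_take (u : Nat → Bool) {j N : Nat} (h : j ≤ N) :
    (prefixOf u N).take j = prefixOf u j := by
  apply List.ext_getElem
  · simp [prefixOf, h]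
  · intro i h1 h2
    rw [List.getElem_take, prefixOf_getElem, prefixOf_getElem]

theorem getD_of_prefix {l l' : List Bool} (h : l <+: l') {i : Nat} (hi : i < l.length)
    (d : Bool) : l.getD i d = l'.getD i d := by
  obtain ⟨t, rfl⟩ := h
  rw [List.getD_eq_getElem _ _ hi, List.getD_eq_getElem _ _ (by simp; omega),
    List.getElem_append_left hi]

theorem prefixOf_eq_take (u : Nat → Bool) (l : List Bool) (L : Nat) (hL : L ≤ l.length)
    (h : ∀ i, i < L → u i = l.getD i false) : prefixOf u L = l.take L := by
  apply List.ext_getElem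
  · rw [prefixOf_length, List.length_take]; omega
  · intro i h1 h2
    rw [List.getElem_take, prefixOf_getElem, h i (by simpa [prefixOf] using h1),
      List.getD_eq_getElem _ _ (by simp [List.length_take] at h2; omega)]



theorem altApply_nil (k s) : altApply k s [] = [] := rfl

theorem altFrom_aligned (k s) (a : Nat) (hA : a % k = 0) (w : List Bool) :
    altFrom k s a w = altApply k s w := by
  rw [altApply_eq]; exact altFrom_congr k s w a 0 (by simp [hA])

theorem altFrom_eraser (k : Nat) (s : Nat -> Bool -> List Bool) (weps : List Bool)
    (hlen : weps.length = k) (hk : 0 < k)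
    (heps : altApply k s weps = []) (a : Nat) :
    altFrom k s a (weps.drop (a % k)) = [] := by
  have h0 : altFrom k s 0 weps = [] := by rw [← altApply_eq]; exact heps
  have hsplit := altFrom_append k s (weps.take (a % k)) 0 (weps.drop (a % k))
  rw [List.take_append_drop] at hsplit
  rw [hsplit] at h0
  have h2 := (List.append_eq_nil_iff.mp h0).2
  have hlt : a % k < k := Nat.mod_lt _ hk
  have hlen' : (weps.take (a % k)).length = a % k := by
    rw [List.length_take, hlen]; omega
  rw [hlen', Nat.zero_add] at h2
  rw [altFrom_congr k s _ a (a % k) (by simp)]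
  exact h2

theorem altApply_concatPre (k s) (u : Nat → List Bool) (hblk : ∀ i, (u i).length = k)
    (m : Nat) : altApply k s (concatPre u m) = concatPre (fun i => altApply k s (u i)) m := by
  induction m with
  | zero => simp [concatPre, altApply_nil]
  | succ m ih =>
      rw [concatPre_succ, concatPre_succ, altApply_eq, altFrom_append, ← altApply_eq, ih,
        Nat.zero_add, concatPre_length k u hblk]
      congr 1
      exact altFrom_aligned k s (m * k) (Nat.mul_mod_left m k) (u m)

theorem key (k : Nat) (s : Nat -> Bool -> List Bool) (weps : List Bool)
    (hk : 2 ≤ k) (hlen : weps.length = k)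
    (heps : altApply k s weps = [])
    (hOC : OC k (altApply k s)) (h : Nat) :
    ∀ (w : List Bool) (f : Nat → Bool), ∃ v : Nat → Bool, ∀ n, ∃ l L, n ≤ L ∧
      (altApply k s)^[h] (w ++ prefixOf v l)
        = (altApply k s)^[h] w ++ prefixOf f L := by
  induction h with
  | zero =>
      intro w f
      refine ⟨f, fun n => ⟨n, n, le_rfl, ?_⟩⟩
      simp
  | succ h IH =>
      intro w f
      obtain ⟨u, hu, hcat⟩ := hOC f
      have hblk : ∀ i, (u i).length = k := fun i => (hu i).1
      have hne : ∀ i, altApply k s (u i) ≠ [] := fun i => (hu i).2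
      set q : List Bool := (altApply k s)^[h] w with hq
      set a : Nat := q.length % k with ha
      set z : List Bool := weps.drop a with hz
      have hak : a < k := Nat.mod_lt _ (by omega)
      have hzlen : z.length = k - a := by rw [hz, List.length_drop, hlen]
      set W : Nat → List Bool := fun M => z ++ concatPre u M with hW
      have hWlen : ∀ M, (W M).length = (k - a) + M * k := by
        intro M; simp [hW, hzlen, concatPre_length k u hblk]
      have hWpre : ∀ {M M' : Nat}, M ≤ M' → W M <+: W M' := by
        intro M M' hMM
        obtain ⟨t, ht⟩ := concatPre_prefix u hMM
        exact ⟨t, by rw [hW]; simp only [List.append_assoc, ht]⟩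
      set g : Nat → Bool := fun i => (W (i+1)).getD i false with hg
      have hgget : ∀ M i, i < (W M).length → g i = (W M).getD i false := by
        intro M i hi
        have hiW : i < (W (i+1)).length := by
          rw [hWlen]
          have : i + 1 ≤ (i + 1) * k := Nat.le_mul_of_pos_right _ (by omega)
          omega
        rcases le_or_gt (i+1) M with hM | hM
        · exact getD_of_prefix (hWpre hM) hiW false
        · exact (getD_of_prefix (hWpre (le_of_lt hM)) hi false).symm
      have hprefW : ∀ L M, L ≤ (W M).length → prefixOf g L = (W M).take L := by
        intro L M hL
        exact prefixOf_eq_take g (W M) L hL (fun i hi => hgget M i (lt_of_lt_of_le hi hL))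
      obtain ⟨v, hv⟩ := IH w g
      refine ⟨v, fun n => ?_⟩
      obtain ⟨l, L', hL', hE⟩ := hv ((k - a) + (n + 2) * k)
      set d : Nat := L' - (k - a) with hd
      set m : Nat := d / k with hm
      set t : Nat := d % k with htdef
      have hdk : d = m * k + t := by
        rw [hm, htdef, Nat.mul_comm]; exact (Nat.div_add_mod d k).symm
      have htk : t < k := Nat.mod_lt _ (by omega)
      have hdlarge : (n + 2) * k ≤ d := by omega
      have hmn : n + 1 ≤ m := by
        by_contra hc
        push_neg at hc
        have h1 : m * k + k ≤ (n + 2) * k := by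
          have h2 : m + 1 ≤ n + 2 := by omega
          calc m * k + k = (m + 1) * k := by ring
            _ ≤ (n + 2) * k := Nat.mul_le_mul_right k h2
        omega
      have hLav : (k - a) ≤ L' := le_trans (by omega) hL'
      have hLW : L' ≤ (W (m+1)).length := by
        rw [hWlen]
        have h1 : (m + 1) * k = m * k + k := by ring
        omega
      have hClen : (concatPre u m).length = m * k := concatPre_length k u hblk m
      have hdecomp : (W (m+1)).take L' = (z ++ concatPre u m) ++ (u m).take t := by
        have h1 : W (m+1) = (z ++ concatPre u m) ++ u m := by
          rw [hW]; simp only [concatPre_succ, List.append_assoc]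
        have h2 : L' = (z ++ concatPre u m).length + t := by
          simp only [List.length_append, hzlen, hClen]; omega
        rw [h1, h2, List.take_length_add_append]
      -- arithmetic for alignment
      have halign : (q.length + z.length) % k = 0 := by
        have h1 := Nat.div_add_mod q.length k
        have h2 : q.length + z.length = k * (q.length / k + 1) := by
          rw [Nat.mul_succ, hzlen]; omega
        rw [h2]; exact Nat.mul_mod_right _ _
      have e1 : altFrom k s q.length z = [] := by
        rw [hz, ha]; exact altFrom_eraser k s weps hlen (by omega) heps q.length
      have e3 : altFrom k s (q.length + z.length) (concatPre u m)
          = concatPre (fun i => altApply k s (u i)) m := by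
        rw [altFrom_aligned k s _ halign, altApply_concatPre k s u hblk]
      have e4 : altFrom k s (q.length + (z.length + (concatPre u m).length)) ((u m).take t)
          = altApply k s ((u m).take t) := by
        apply altFrom_aligned
        rw [hClen, ← Nat.add_assoc, Nat.add_mul_mod_self_right]
        exact halign
      have hcomp : altApply k s (q ++ ((z ++ concatPre u m) ++ (u m).take t))
          = altApply k s q ++ (concatPre (fun i => altApply k s (u i)) m
              ++ altApply k s ((u m).take t)) := by
        rw [altApply_eq k s (q ++ _), altFrom_append k s q, Nat.zero_add,
          altFrom_append k s (z ++ concatPre u m), altFrom_append k s z,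
          e1, List.nil_append, List.length_append, e3, e4, ← altApply_eq]
      set X : List Bool := concatPre (fun i => altApply k s (u i)) m
          ++ altApply k s ((u m).take t) with hX
      have hXpre : X <+: concatPre (fun i => altApply k s (u i)) (m+1) := by
        refine ⟨altFrom k s t ((u m).drop t), ?_⟩
        rw [hX, concatPre_succ, List.append_assoc]
        congr 1
        have h6 : ((u m).take t).length = t := by rw [List.length_take, hblk m]; omega
        have h7 := altFrom_append k s ((u m).take t) 0 ((u m).drop t)
        rw [List.take_append_drop, Nat.zero_add, h6] at h7
        simp only [← altApply_eq] at h7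
        exact h7.symm
      have hXle : X.length ≤ (concatPre (fun i => altApply k s (u i)) (m+1)).length :=
        hXpre.length_le
      have hXeq : X = prefixOf f X.length := by
        have h8 := List.prefix_iff_eq_take.mp hXpre
        rw [hcat (m+1)] at h8
        exact h8.trans (prefixOf_take f hXle)
      have hXlen : n ≤ X.length := by
        have h9 := le_concatPre_length (fun i => altApply k s (u i)) hne m
        simp only [hX, List.length_append]; omega
      refine ⟨l, X.length, hXlen, ?_⟩
      rw [← hq] at hE
      have hfin : (altApply k s)^[h+1] (w ++ prefixOf v l) = altApply k s q ++ X := by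
        rw [Function.iterate_succ_apply', hE, hprefW L' (m+1) hLW, hdecomp, hcomp, hX]
      rw [hfin, Function.iterate_succ_apply' (altApply k s) h w, ← hq, ← hXeq]

end Aux

/-- if the alternating substitution (given by `s`) is completely
erasing and satisfies the optimality condition, then whenever
`sigma^h(w) = p` (finite), for every infinite word `u` there is an infinite
word `v` with `sigma^h(wv) = pu` (in the sense that the iterated images of the
finite prefixes of `wv` are exactly the prefixes of `pu`, of unbounded
length). -/
theorem completely_erasing_extend_to_target
    (k : Nat) (s : Nat -> Bool -> List Bool) (weps : List Bool)
    (hk : 2 ≤ k) (hlen : weps.length = k)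
    (hne1 : weps ≠ List.replicate k true)
    (herase : ∀ w : List Bool, w.length = k → (altApply k s w = [] ↔ w = weps))
    (hCE : ∀ w : List Bool, ∃ n : Nat, (altApply k s)^[n] w = [])
    (hOC : OC k (altApply k s)) :
    ∀ (w p : List Bool) (h : Nat), (altApply k s)^[h] w = p →
      ∀ u : Nat -> Bool, ∃ v : Nat -> Bool, ∀ m : Nat, ∃ l : Nat,
        m ≤ ((altApply k s)^[h] (w ++ prefixOf v l)).length ∧
        (altApply k s)^[h] (w ++ prefixOf v l)
          = prefixOf
              (fun i => if i < p.length then p.getD i false else u (i - p.length))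
              ((altApply k s)^[h] (w ++ prefixOf v l)).length := by
  intro w p h hph u
  have heps : altApply k s weps = [] := (herase weps hlen).mpr rfl
  obtain ⟨v, hv⟩ := Aux.key k s weps hk hlen heps hOC h w u
  refine ⟨v, fun m => ?_⟩
  obtain ⟨l, L, hL, hE⟩ := hv m
  rw [hph] at hE
  refine ⟨l, ?_, ?_⟩
  · rw [hE]
    simp only [List.length_append, Aux.prefixOf_length]
    omega
  · rw [hE]
    have hlen2 : (p ++ prefixOf u L).length = p.length + L := by
      simp [Aux.prefixOf_length]
    rw [hlen2]
    apply List.ext_getElem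
    · simp [Aux.prefixOf_length]
    · intro i h1 h2
      rw [Aux.prefixOf_getElem]
      by_cases hip : i < p.length
      · rw [List.getElem_append_left hip]
        simp [hip, List.getD_eq_getElem p false hip]
      · rw [List.getElem_append_right (le_of_not_gt hip)]
        simp only [hip, if_false]
        rw [Aux.prefixOf_getElem]
end

section
/- If σ is completely erasing and verifies the optimality condition, then for every n ∈ ℕ there exists a finite binary word w with vanishing order ε(w) = n (the least m with σ^m(w) = ε equals exactly n). -/
lemma join_append' (a b : List (List Bool)) : (a ++ b).flatten = a.flatten ++ b.flatten :=
  List.flatten_append ..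

lemma altApply_nil (k : Nat) (s : Nat -> Bool -> List Bool) : altApply k s [] = [] := by
  simp [altApply]

lemma mapmod (k : Nat) (s : Nat -> Bool -> List Bool) :
    ∀ (b : List Bool) (n m : Nat), n % k = m % k →
      (b.zipIdx n).map (fun p => s (p.2 % k) p.1)
        = (b.zipIdx m).map (fun p => s (p.2 % k) p.1) := by
  intro b
  induction b with
  | nil => intro n m _; simp
  | cons x b ih =>
    intro n m h
    simp only [List.zipIdx_cons, List.map_cons, h]
    rw [ih (n+1) (m+1) (by rw [Nat.add_mod, h, ← Nat.add_mod])]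

lemma altApply_append (k : Nat) (s : Nat -> Bool -> List Bool) (a b : List Bool)
    (h : a.length % k = 0) :
    altApply k s (a ++ b) = altApply k s a ++ altApply k s b := by
  unfold altApply
  rw [List.zipIdx_append, List.map_append, join_append']
  congr 1
  rw [mapmod k s b (0 + a.length) 0 (by simp [h])]

/-- `altApply` sends prefixes to prefixes. -/
lemma altApply_prefix (k : Nat) (s : Nat -> Bool -> List Bool) {a x : List Bool}
    (h : a <+: x) : altApply k s a <+: altApply k s x := by
  obtain ⟨b, rfl⟩ := h
  unfold altApply
  rw [List.zipIdx_append, List.map_append, join_append']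
  exact ⟨_, rfl⟩

lemma iterate_prefix (k : Nat) (s : Nat -> Bool -> List Bool) (n : Nat) {a x : List Bool}
    (h : a <+: x) : (altApply k s)^[n] a <+: (altApply k s)^[n] x := by
  induction n generalizing a x with
  | zero => exact h
  | succ n ih =>
    rw [Function.iterate_succ_apply, Function.iterate_succ_apply]
    exact ih (altApply_prefix k s h)

lemma iterate_nil (k : Nat) (s : Nat -> Bool -> List Bool) (n : Nat) :
    (altApply k s)^[n] [] = [] := by
  induction n with
  | zero => rfl
  | succ n ih => rw [Function.iterate_succ_apply, altApply_nil]; exact ih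

lemma iterate_empty_mono (k : Nat) (s : Nat -> Bool -> List Bool) {a b : Nat} (w : List Bool)
    (hab : a ≤ b) (h : (altApply k s)^[a] w = []) : (altApply k s)^[b] w = [] := by
  have : b = (b - a) + a := by omega
  rw [this, Function.iterate_add_apply, h, iterate_nil]

lemma concatPre_succ (v : Nat -> List Bool) (m : Nat) :
    concatPre v (m + 1) = concatPre v m ++ v m := by
  unfold concatPre
  rw [List.ofFn_succ']
  simp [List.flatten_concat]

lemma concatPre_length_ge (v : Nat -> List Bool) (m : Nat) (h : ∀ i, v i ≠ []) :
    m ≤ (concatPre v m).length := by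
  induction m with
  | zero => simp
  | succ m ih =>
    rw [concatPre_succ, List.length_append]
    have := List.length_pos_iff.2 (h m)
    omega

lemma concatPre_length_blocks (k : Nat) (u : Nat -> List Bool) (hu : ∀ i, (u i).length = k)
    (m : Nat) : (concatPre u m).length = m * k := by
  induction m with
  | zero => simp [concatPre]
  | succ m ih => rw [concatPre_succ, List.length_append, ih, hu]; ring

lemma altApply_concatPre (k : Nat) (s : Nat -> Bool -> List Bool) (u : Nat -> List Bool)
    (hu : ∀ i, (u i).length = k) (m : Nat) :
    altApply k s (concatPre u m) = concatPre (fun i => altApply k s (u i)) m := by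
  induction m with
  | zero => simp [concatPre, altApply_nil]
  | succ m ih =>
    rw [concatPre_succ, concatPre_succ,
      altApply_append k s _ _ (by rw [concatPre_length_blocks k u hu]; simp [Nat.mul_mod_left]),
      ih]

lemma prefixOf_prefix (f : Nat -> Bool) {m L : Nat} (h : m ≤ L) :
    prefixOf f m <+: prefixOf f L := by
  have : prefixOf f m = (prefixOf f L).take m := by
    apply List.ext_getElem
    · simp [prefixOf]; omega
    · intro i h1 h2
      simp [prefixOf]
  rw [this]
  exact List.take_prefix _ _

lemma prefixOf_getD (w : List Bool) :
    prefixOf (fun i => w.getD i false) w.length = w := by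
  unfold prefixOf
  apply List.ext_getElem (by simp)
  intro i h1 h2
  simp only [List.getElem_ofFn]
  exact w.getD_eq_getElem false h2

/-- Unboundedness of vanishing orders. -/
lemma unbounded (k : Nat) (s : Nat -> Bool -> List Bool) (weps : List Bool)
    (hk : 2 ≤ k) (hlen : weps.length = k) (hOC : OC k (altApply k s)) :
    ∀ n : Nat, ∃ w : List Bool, (altApply k s)^[n] w ≠ [] := by
  intro n
  induction n with
  | zero =>
    refine ⟨weps, ?_⟩
    simp only [Function.iterate_zero, id]
    intro h; rw [h] at hlen; simp at hlen; omega
  | succ n ih =>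
    obtain ⟨w, hw⟩ := ih
    obtain ⟨u, hu, hpre⟩ := hOC (fun i => w.getD i false)
    set m := w.length with hm
    have hL : m ≤ (concatPre (fun i => altApply k s (u i)) m).length :=
      concatPre_length_ge _ m (fun i => (hu i).2)
    have hw_pre : w <+: altApply k s (concatPre u m) := by
      rw [altApply_concatPre k s u (fun i => (hu i).1) m, hpre m]
      calc w = prefixOf (fun i => w.getD i false) m := (prefixOf_getD w).symm
        _ <+: _ := prefixOf_prefix _ hL
    refine ⟨concatPre u m, ?_⟩
    rw [Function.iterate_succ_apply]
    intro h
    have := iterate_prefix k s n hw_pre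
    rw [h] at this
    exact hw (List.prefix_nil.mp this)

/-- if the alternating substitution (given by `s`) is completely
erasing and satisfies the optimality condition, then every positive integer is
attained as a vanishing order: for each `n ≥ 1` there is a finite word `w`
erased by exactly `n` iterations. -/
theorem every_vanishing_order_attained
    (k : Nat) (s : Nat -> Bool -> List Bool) (weps : List Bool)
    (hk : 2 ≤ k) (hlen : weps.length = k)
    (hne1 : weps ≠ List.replicate k true)
    (herase : ∀ w : List Bool, w.length = k → (altApply k s w = [] ↔ w = weps))
    (hCE : ∀ w : List Bool, ∃ n : Nat, (altApply k s)^[n] w = [])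
    (hOC : OC k (altApply k s)) :
    ∀ n : Nat, 0 < n → ∃ w : List Bool,
      (altApply k s)^[n] w = [] ∧ ∀ m < n, (altApply k s)^[m] w ≠ [] := by
  intro n hn
  obtain ⟨w, hw⟩ := unbounded k s weps hk hlen hOC (n - 1)
  classical
  set N := Nat.find (hCE w) with hN
  have hNempty : (altApply k s)^[N] w = [] := Nat.find_spec (hCE w)
  have hnN : n ≤ N := by
    by_contra h
    exact hw (iterate_empty_mono k s w (by omega) hNempty)
  refine ⟨(altApply k s)^[N - n] w, ?_, ?_⟩
  · rw [← Function.iterate_add_apply]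
    have : n + (N - n) = N := by omega
    rw [this]; exact hNempty
  · intro m hm
    rw [← Function.iterate_add_apply]
    exact Nat.find_min (hCE w) (by omega)
end
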